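/- Let (x; x_1,...,x_n) ∈ ℝ^{1+n} be reduced and let (d; d_1,...,d_n) ∈ ℝ^{1+n} be positive with −K·(d; d_i) ≥ 0 (i.e. Σ_i d_i ≤ 3d) and d ≥ max_i d_i. Then (x; x_i)·(d; d_i) ≥ 0. -/

import Mathlib

/-- The product `(x; x_i)·(y; y_i) = x*y - ∑ i, x_i * y_i` on `ℝ^{1+(n+3)}`. -/
def dotp {n : ℕ} (x y : ℝ × (Fin (n + 3) → ℝ)) : ℝ :=
  x.1 * y.1 - ∑ i, x.2 i * y.2 i

/-- The vector `-K = (3; 1, 1, …, 1)`. -/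
def negK {n : ℕ} : ℝ × (Fin (n + 3) → ℝ) := (3, fun _ => 1)

/-- The Cremona transform. -/
def Cr {n : ℕ} (d : ℝ × (Fin (n + 3) → ℝ)) : ℝ × (Fin (n + 3) → ℝ) :=
  (2 * d.1 - d.2 0 - d.2 1 - d.2 2,
    fun i =>
      if i = 0 then d.1 - d.2 1 - d.2 2
      else if i = 1 then d.1 - d.2 0 - d.2 2
      else if i = 2 then d.1 - d.2 0 - d.2 1
      else d.2 i)

/-- A vector is positive if all its entries are nonnegative. -/
def PositiveVec {n : ℕ} (d : ℝ × (Fin (n + 3) → ℝ)) : Prop :=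
  0 ≤ d.1 ∧ ∀ i, 0 ≤ d.2 i

/-- A vector is ordered if `d_i ≥ d_{i+1}` whenever both are nonzero, and nonzero
entries precede zero entries. -/
def OrderedVec {n : ℕ} (d : ℝ × (Fin (n + 3) → ℝ)) : Prop :=
  (∀ (i : ℕ) (h1 : i < n + 3) (h2 : i + 1 < n + 3),
      d.2 ⟨i, h1⟩ ≠ 0 → d.2 ⟨i + 1, h2⟩ ≠ 0 → d.2 ⟨i + 1, h2⟩ ≤ d.2 ⟨i, h1⟩) ∧
  (∀ i j : Fin (n + 3), d.2 i ≠ 0 → d.2 j = 0 → i < j)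

/-- A vector is reduced if it is positive, ordered, and `d ≥ d_1 + d_2 + d_3`. -/
def ReducedVec {n : ℕ} (d : ℝ × (Fin (n + 3) → ℝ)) : Prop :=
  PositiveVec d ∧ OrderedVec d ∧ d.2 0 + d.2 1 + d.2 2 ≤ d.1

/-- A vector has integer entries. -/
def IntVec {n : ℕ} (d : ℝ × (Fin (n + 3) → ℝ)) : Prop :=
  (∃ z : ℤ, d.1 = z) ∧ ∀ i, ∃ z : ℤ, d.2 i = z

/-- The set `E` of integer vectors with `(d;d_i)·(d;d_i) ≥ -1` and `-K·(d;d_i) = 1`. -/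
def ESet {n : ℕ} : Set (ℝ × (Fin (n + 3) → ℝ)) :=
  {d | IntVec d ∧ -1 ≤ dotp d d ∧ dotp negK d = 1}

/-- The set `C` of integer vectors with `(x;x_i)·(x;x_i) ≥ 0` that pair nonnegatively
with every element of `E`. -/
def CSet {n : ℕ} : Set (ℝ × (Fin (n + 3) → ℝ)) :=
  {x | IntVec x ∧ 0 ≤ dotp x x ∧ ∀ d ∈ ESet, 0 ≤ dotp x d}

lemma vec_antitone {n : ℕ} (x : ℝ × (Fin (n + 3) → ℝ)) (hpos : ∀ i, 0 ≤ x.2 i)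
    (hord : OrderedVec x) : ∀ i j : Fin (n + 3), i ≤ j → x.2 j ≤ x.2 i := by
  obtain ⟨h1, h2⟩ := hord
  have step : ∀ (i : ℕ) (hi : i < n + 3) (hi1 : i + 1 < n + 3),
      x.2 ⟨i + 1, hi1⟩ ≤ x.2 ⟨i, hi⟩ := by
    intro i hi hi1
    by_cases hz : x.2 ⟨i + 1, hi1⟩ = 0
    · rw [hz]; exact hpos _
    · by_cases hz0 : x.2 ⟨i, hi⟩ = 0
      · exact absurd (h2 _ _ hz hz0) (by simp [Fin.lt_def])
      · exact h1 i hi hi1 hz0 hz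
  rintro ⟨i, hi⟩ ⟨j, hj⟩ hij
  simp only [Fin.mk_le_mk] at hij
  induction j, hij using Nat.le_induction with
  | base => exact le_refl _
  | succ j hij ih =>
      exact le_trans (step j (by omega) hj) (ih (by omega))

theorem intersection_positivity {n : ℕ} (x d : ℝ × (Fin (n + 3) → ℝ))
    (hx : ReducedVec x) (hd : PositiveVec d) (hK : 0 ≤ dotp negK d)
    (hmax : ∀ i, d.2 i ≤ d.1) :
    0 ≤ dotp x d := by
  obtain ⟨⟨hx1, hxpos⟩, hord, hred⟩ := hx
  obtain ⟨hd1, hdpos⟩ := hd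
  have anti := vec_antitone x hxpos hord
  set t := x.2 2 with ht
  have hsumd : ∑ i, d.2 i ≤ 3 * d.1 := by
    have := hK; simp only [dotp, negK, one_mul] at this; linarith
  set f : Fin (n + 3) → ℝ := fun i => (x.2 i - t) * d.2 i with hf
  have hmem0 : (0 : Fin (n + 3)) ∈ Finset.univ := Finset.mem_univ _
  have hmem1 : (1 : Fin (n + 3)) ∈ Finset.univ.erase 0 := by
    simp [Fin.ext_iff]
  have hsplit : ∑ i, f i = f 0 + (f 1 + ∑ i ∈ (Finset.univ.erase 0).erase 1, f i) := by
    rw [Finset.add_sum_erase _ f hmem1, Finset.add_sum_erase _ f hmem0]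
  have hrest : ∑ i ∈ (Finset.univ.erase 0).erase 1, f i ≤ 0 := by
    apply Finset.sum_nonpos
    intro i hi
    simp only [Finset.mem_erase] at hi
    have h2i : (2 : Fin (n + 3)) ≤ i := by
      have v0 : i.val ≠ 0 := fun h => hi.2.1 (Fin.ext (by simp [h]))
      have v1 : i.val ≠ 1 := fun h => hi.1 (Fin.ext (by simp [h, Fin.val_one]))
      have : (2 : Fin (n + 3)).val = 2 := by
        simp [Fin.val_two]
      rw [Fin.le_def, this]; omega
    have := anti 2 i h2i
    apply mul_nonpos_of_nonpos_of_nonneg (by linarith) (hdpos i)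
  have h02 : t ≤ x.2 0 := anti 0 2 (by simp [Fin.le_def, Fin.val_two])
  have h12 : t ≤ x.2 1 := anti 1 2 (by simp [Fin.le_def, Fin.val_two, Fin.val_one]; rw [Nat.mod_eq_of_lt (by omega)] <;> omega)
  have hf0 : f 0 ≤ (x.2 0 - t) * d.1 :=
    mul_le_mul_of_nonneg_left (hmax 0) (by linarith)
  have hf1 : f 1 ≤ (x.2 1 - t) * d.1 :=
    mul_le_mul_of_nonneg_left (hmax 1) (by linarith)
  have ht0 : 0 ≤ t := hxpos 2
  have htsum : t * ∑ i, d.2 i ≤ t * (3 * d.1) :=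
    mul_le_mul_of_nonneg_left hsumd ht0
  have hdecomp : ∑ i, x.2 i * d.2 i = ∑ i, f i + t * ∑ i, d.2 i := by
    rw [Finset.mul_sum, ← Finset.sum_add_distrib]
    exact Finset.sum_congr rfl fun i _ => by simp [hf]; ring
  have hfin : (x.2 0 + x.2 1 + t) * d.1 ≤ x.1 * d.1 :=
    mul_le_mul_of_nonneg_right (by linarith) hd1
  simp only [dotp]
  nlinarith [hsplit, hrest, hf0, hf1, htsum, hdecomp, hfin]
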